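/- Let A be a commutative ℚ-algebra, V an A-module, D : V → V an A-linear map, ν ∈ A, and let f, Φ ∈ V satisfy DΦ = f. In V⟦ħ⟧, define e^{cħD} = ∑_{k≥0} c^k·ħ^k·D^k/k! for c ∈ A (acting coefficientwise). Then e^{(ν−1)ħD}·(e^{ħD} − 1)·(Φ + ∑_{m≥0} (B_{m+1}(1−ν)/(m+1)!)·ħ^{m+1}·D^m f) = ħ·f, where B_n(X) denotes the n-th Bernoulli polynomial, defined by w·e^{Xw}/(e^w − 1) = ∑_{n≥0} B_n(X)·w^n/n!, evaluated at 1−ν ∈ A. -/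

import Mathlib

open PowerSeries Finset Polynomial Nat


/-- The coefficientwise action of the operator `e^{cℏD} = ∑_k cᵏ ℏᵏ Dᵏ/k!` (for `c ∈ A`)
on a formal power series `∑_n ℏⁿ F n` with coefficients in an `A`-module `V`, where `A`
is a commutative `ℚ`-algebra: the `n`-th coefficient of the result is
`∑_{k≤n} ((1/k!)·cᵏ) • Dᵏ (F (n−k))`. -/
noncomputable def expOpA {A V : Type*} [CommRing A] [Algebra ℚ A]
    [AddCommGroup V] [Module A V] (D : V →ₗ[A] V) (c : A) (F : ℕ → V) : ℕ → V :=
  fun n => ∑ k ∈ Finset.range (n + 1),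
    (algebraMap ℚ A (1 / (k.factorial : ℚ)) * c ^ k) • (D ^ k) (F (n - k))

/-- The coefficients of the series `Φ + ∑_{m≥0} (B_{m+1}(1−ν)/(m+1)!)·ℏ^{m+1}·Dᵐ f`:
`Φ` at `ℏ⁰` and `(B_k(1−ν)/k!) • D^{k−1} f` at `ℏᵏ` for `k ≥ 1`, where `B_n(X)` is the
`n`-th Bernoulli polynomial evaluated at `1−ν ∈ A`. -/
noncomputable def bernoulliPolySeries {A V : Type*} [CommRing A] [Algebra ℚ A]
    [AddCommGroup V] [Module A V] (D : V →ₗ[A] V) (ν : A) (f Φ : V) : ℕ → V :=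
  fun k => if k = 0 then Φ else
    (algebraMap ℚ A (1 / (k.factorial : ℚ))
        * Polynomial.aeval (1 - ν) (Polynomial.bernoulli k)) • (D ^ (k - 1)) f

section Aux

variable {A V : Type*} [CommRing A] [Algebra ℚ A]
    [AddCommGroup V] [Module A V] (D : V →ₗ[A] V) (ν : A) (f Φ : V)

noncomputable def bernB (ν : A) : PowerSeries A :=
  PowerSeries.mk fun n => aeval (1 - ν) ((1 / (n.factorial : ℚ)) • Polynomial.bernoulli n)

lemma step1 (h : D Φ = f) (j : ℕ) :
    expOpA D 1 (bernoulliPolySeries D ν f Φ) j - bernoulliPolySeries D ν f Φ j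
      = (PowerSeries.coeff j ((exp A - 1) * bernB ν)) • (D ^ (j - 1)) f := by
  have hcoeff : ∀ m : ℕ, PowerSeries.coeff m (bernB ν)
      = algebraMap ℚ A (1 / (m.factorial : ℚ)) * aeval (1 - ν) (bernoulli m) := by
    intro m
    simp [bernB, Algebra.smul_def]
  rw [PowerSeries.coeff_mul, Finset.Nat.sum_antidiagonal_eq_sum_range_succ_mk]
  rw [Finset.sum_range_succ' _ j]
  simp only [PowerSeries.coeff_zero_eq_constantCoeff]
  rw [show (PowerSeries.constantCoeff (R := A)) (exp A - 1) = 0 by simp, zero_mul, add_zero]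
  unfold expOpA
  rw [Finset.sum_range_succ' _ j]
  simp only [pow_zero, mul_one, Nat.factorial_zero, Nat.cast_one, Nat.sub_zero,
    Module.End.one_apply, one_div_one, map_one, one_smul]
  rw [add_sub_cancel_right, Finset.sum_smul]
  refine Finset.sum_congr rfl ?_
  intro i hi
  rw [Finset.mem_range] at hi
  have hexp : PowerSeries.coeff (i+1) (exp A - 1)
      = algebraMap ℚ A (1 / ((i+1).factorial : ℚ)) := by
    simp [PowerSeries.coeff_exp]
  rw [hexp]
  rcases eq_or_lt_of_le (Nat.succ_le_of_lt hi) with he | hlt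
  · have h1 : j - (i + 1) = 0 := by omega
    rw [h1, hcoeff 0]
    rw [show bernoulliPolySeries D ν f Φ 0 = Φ from if_pos rfl]
    have hD : (D ^ (i + 1)) Φ = (D ^ (j - 1)) f := by
      have hji : j - 1 = i := by omega
      rw [hji, pow_succ, Module.End.mul_apply, h]
    rw [hD]
    simp
  · set m := j - (i + 1) with hm
    have hm1 : m ≠ 0 := by omega
    rw [hcoeff m]
    simp only [bernoulliPolySeries, if_neg hm1]
    rw [map_smul, smul_smul]
    have hD : (D ^ (i + 1)) ((D ^ (m - 1)) f) = (D ^ (j - 1)) f := by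
      rw [← Module.End.mul_apply, ← pow_add]
      congr 2
      omega
    rw [hD, one_pow, mul_one]

lemma bern_key : rescale (ν - 1) (exp A) * ((exp A - 1) * bernB ν)
    = PowerSeries.X := by
  rw [mul_comm (exp A - 1), bernB, Polynomial.bernoulli_generating_function (1 - ν)]
  rw [mul_comm PowerSeries.X, ← mul_assoc, exp_mul_exp_eq_exp_add]
  rw [show (ν - 1) + (1 - ν) = 0 by ring, rescale_zero]
  simp

end Aux

/-- Let `A` be a commutative `ℚ`-algebra, `V` an `A`-module,
`D : V → V` an `A`-linear map, `ν ∈ A`, and `f, Φ ∈ V` with `DΦ = f`.  Then in `V⟦ℏ⟧`: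
`e^{(ν−1)ℏD}·(e^{ℏD} − 1)·(Φ + ∑_{m≥0} (B_{m+1}(1−ν)/(m+1)!)·ℏ^{m+1}·Dᵐ f) = ℏ·f`. -/
theorem shift_operator_inverse_formula {A V : Type*} [CommRing A] [Algebra ℚ A]
    [AddCommGroup V] [Module A V] (D : V →ₗ[A] V) (ν : A) (f Φ : V) (h : D Φ = f) :
    ∀ n : ℕ,
      expOpA D (ν - 1)
        (fun j => expOpA D 1 (bernoulliPolySeries D ν f Φ) j
          - bernoulliPolySeries D ν f Φ j) n
      = if n = 1 then f else 0 := by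
  intro n
  set G := bernoulliPolySeries D ν f Φ with hG
  set Hf : ℕ → V := fun j => expOpA D 1 G j - G j with hHf
  have H1 : ∀ j, Hf j = (PowerSeries.coeff j ((exp A - 1) * bernB ν)) • (D ^ (j - 1)) f :=
    fun j => step1 D ν f Φ h j
  have H0 : Hf 0 = 0 := by
    simp [hHf, hG, expOpA]
  rcases Nat.eq_zero_or_pos n with rfl | hn
  · simp [expOpA, H0]
  have key : expOpA D (ν - 1) Hf n
      = (PowerSeries.coeff n
          (rescale (ν - 1) (exp A) * ((exp A - 1) * bernB ν))) • (D ^ (n - 1)) f := by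
    rw [PowerSeries.coeff_mul, Finset.Nat.sum_antidiagonal_eq_sum_range_succ_mk]
    simp only [Prod.fst, Prod.snd]
    unfold expOpA
    rw [Finset.sum_range_succ, Finset.sum_range_succ]
    rw [Nat.sub_self, H0, map_zero, smul_zero, add_zero]
    have hc0 : PowerSeries.coeff 0 ((exp A - 1) * bernB ν) = 0 := by
      rw [PowerSeries.coeff_zero_eq_constantCoeff]
      simp
    rw [hc0, mul_zero, add_zero, Finset.sum_smul]
    refine Finset.sum_congr rfl ?_
    intro k hk
    rw [Finset.mem_range] at hk
    rw [H1 (n - k), map_smul, smul_smul]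
    rw [coeff_rescale, PowerSeries.coeff_exp]
    have hD : (D ^ k) ((D ^ (n - k - 1)) f) = (D ^ (n - 1)) f := by
      rw [← Module.End.mul_apply, ← pow_add]
      congr 2
      omega
    rw [hD]
    ring_nf
  rw [key, bern_key]
  rcases eq_or_ne n 1 with rfl | h1
  · simp
  · rw [if_neg h1, PowerSeries.coeff_X, if_neg h1, zero_smul]
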